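/- (Theorem 2, extremal polynomial.) Let A, B be real numbers, λ > 0, and let n, s be positive integers. The function p_{n−1}^{(λ,s)}(z) := τ_n(z, ā) · S_n(R_{n,s}^{λ})(z) coincides with a polynomial of degree at most n−1 in z, and it attains the infimum defining the best weighted approximation: ∫_{-∞}^{∞} |K_{λ,s}(t) − p_{n−1}^{(λ,s)}(t)|² |ρ_n(t)|^{−2} dt = inf over polynomials p with complex coefficients of degree ≤ n−1 of ∫_{-∞}^{∞} |K_{λ,s}(t) − p(t)|² |ρ_n(t)|^{−2} dt. -/

import Mathlib

open MeasureTheory Complex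
open Finset Filter

/-- χ_k := |1 + a_k²| / (1 + a_k²).  (0-based indexing: `a k` is the paper's a_{k+1}.) -/
noncomputable def chi (a : ℕ → ℂ) (k : ℕ) : ℂ :=
  (‖1 + a k ^ 2‖ : ℂ) / (1 + a k ^ 2)

/-- Blaschke product: `Blaschke a j` is the paper's B_{j+1}, i.e. the product over the
first `j` points (so `Blaschke a 0 = 1 = B₁`). -/
noncomputable def Blaschke (a : ℕ → ℂ) (j : ℕ) (z : ℂ) : ℂ :=
  ∏ k ∈ Finset.range j, chi a k * (z - a k) / (z - starRingEnd ℂ (a k))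

/-- Takenaka–Malmqvist function: `Phi a j` is the paper's Φ_{j+1}. -/
noncomputable def Phi (a : ℕ → ℂ) (j : ℕ) (z : ℂ) : ℂ :=
  (Real.sqrt ((a j).im) : ℂ) * Blaschke a j z / (z - starRingEnd ℂ (a j))

/-- τ_n(z, b) := ∏_{k=1}^n (z − b_k). -/
noncomputable def tau (n : ℕ) (z : ℂ) (b : ℕ → ℂ) : ℂ :=
  ∏ k ∈ Finset.range n, (z - b k)

/-- ν_m(z, b) := Σ_{k₁+⋯+k_n = m} ∏_{j=1}^n (z − b_j)^{−k_j}. -/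
noncomputable def nu (n m : ℕ) (z : ℂ) (b : ℕ → ℂ) : ℂ :=
  ∑ k ∈ Finset.Nat.antidiagonalTuple n m, ∏ j : Fin n, ((z - b (j : ℕ)) ^ (k j))⁻¹

/-- R_{n,s}^λ(z) := (A + Bz) / ((z² + λ²)^{s+1} τ_n(z, ā)). -/
noncomputable def Rker (A B : ℂ) (lam : ℝ) (n s : ℕ) (a : ℕ → ℂ) (z : ℂ) : ℂ :=
  (A + B * z) / ((z ^ 2 + (lam : ℂ) ^ 2) ^ (s + 1) * tau n z (fun k => starRingEnd ℂ (a k)))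

/-- Partial Fourier sum S_n(R_{n,s}^λ)(z) := Σ_{j=1}^n R̂(j) Φ_j(z), where
R̂(j) := (1/π) ∫ R_{n,s}^λ(t) conj(Φ_j(t)) dt. -/
noncomputable def Sn (A B : ℂ) (lam : ℝ) (n s : ℕ) (a : ℕ → ℂ) (z : ℂ) : ℂ :=
  ∑ j ∈ Finset.range n,
    ((1 / Real.pi : ℂ) * ∫ t : ℝ, Rker A B lam n s a t * starRingEnd ℂ (Phi a j t)) *
      Phi a j z

/-- D_l := Σ_{j=0}^{s−l} [(2iλ)^{s−j} C(s+j,s) ν_{s−l−j}(iλ, ā) / ((2λ)^{2s+1} τ_n(iλ, ā))]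
· (Bλ(s(s+j) − 2j)/(s(s+j)) − iA). -/
noncomputable def Dcoef (A B : ℂ) (lam : ℝ) (n s : ℕ) (a : ℕ → ℂ) (l : ℕ) : ℂ :=
  ∑ j ∈ Finset.range (s - l + 1),
    (2 * I * (lam : ℂ)) ^ (s - j) * ((s + j).choose s : ℂ) *
        nu n (s - l - j) (I * lam) (fun k => starRingEnd ℂ (a k)) /
      ((2 * (lam : ℂ)) ^ (2 * s + 1) * tau n (I * lam) (fun k => starRingEnd ℂ (a k))) *
      (B * lam * ((s : ℂ) * ((s : ℂ) + (j : ℂ)) - 2 * (j : ℂ)) /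
          ((s : ℂ) * ((s : ℂ) + (j : ℂ))) -
        I * A)

/-- The kernel K_{λ,s}(z) := (A + Bz)/(z² + λ²)^{s+1}. -/
noncomputable def Kker (A B : ℂ) (lam : ℝ) (s : ℕ) (z : ℂ) : ℂ :=
  (A + B * z) / (z ^ 2 + (lam : ℂ) ^ 2) ^ (s + 1)



lemma sub_ne_of_im_ne {c : ℂ} (hc : c.im ≠ 0) (t : ℝ) : (t : ℂ) - c ≠ 0 := by
  intro h
  have h2 : ((t:ℂ) - c).im = 0 := by rw [h]; simp
  simp [Complex.sub_im] at h2
  exact hc h2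

lemma abs_im_le_norm_sub (c : ℂ) (t : ℝ) : |c.im| ≤ ‖(t:ℂ) - c‖ := by
  have h := Complex.abs_im_le_norm ((t:ℂ) - c)
  simpa [Complex.sub_im] using h

lemma norm_sub_conj (c : ℂ) (t : ℝ) : ‖(t:ℂ) - (starRingEnd ℂ) c‖ = ‖(t:ℂ) - c‖ := by
  rw [show (t:ℂ) - (starRingEnd ℂ) c = (starRingEnd ℂ) ((t:ℂ) - c) by
    simp [map_sub, Complex.conj_ofReal]]
  exact RCLike.norm_conj _

lemma integrable_of_quad_decay {c₁ c₂ : ℂ} (h₁ : c₁.im ≠ 0) (h₂ : c₂.im ≠ 0)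
    {f : ℝ → ℂ} (hf : Continuous f) {D : ℝ}
    (hb : ∀ t : ℝ, ‖f t‖ ≤ D / (‖(t:ℂ) - c₁‖ * ‖(t:ℂ) - c₂‖)) :
    Integrable f := by
  have hpos : ∀ t : ℝ, 0 < ‖(t:ℂ) - c₁‖ * ‖(t:ℂ) - c₂‖ := fun t =>
    mul_pos (norm_pos_iff.2 (sub_ne_of_im_ne h₁ t)) (norm_pos_iff.2 (sub_ne_of_im_ne h₂ t))
  have hD : 0 ≤ D := by
    have h0 := (norm_nonneg (f 0)).trans (hb 0)
    by_contra hneg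
    push_neg at hneg
    have : D / (‖(0:ℂ) - c₁‖ * ‖(0:ℂ) - c₂‖) < 0 :=
      div_neg_of_neg_of_pos hneg (by simpa using hpos 0)
    simp only [Complex.ofReal_zero] at h0
    linarith
  -- find C with 1 + t^2 ≤ C * (‖t-c₁‖ * ‖t-c₂‖)
  set m₁ := |c₁.im| with hm₁
  set m₂ := |c₂.im| with hm₂
  have hm₁0 : 0 < m₁ := abs_pos.2 h₁
  have hm₂0 : 0 < m₂ := abs_pos.2 h₂
  set M : ℝ := 2 * (‖c₁‖ + ‖c₂‖) + 2 with hM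
  have hM2 : 2 ≤ M := by nlinarith [norm_nonneg c₁, norm_nonneg c₂]
  obtain ⟨C, hC0, hC⟩ : ∃ C : ℝ, 0 ≤ C ∧
      ∀ t : ℝ, 1 + t^2 ≤ C * (‖(t:ℂ) - c₁‖ * ‖(t:ℂ) - c₂‖) := by
    refine ⟨max 8 ((1 + M^2) / (m₁ * m₂)), le_max_of_le_left (by norm_num), fun t => ?_⟩
    rcases le_or_gt |t| M with htM | htM
    · have hb₁ : m₁ ≤ ‖(t:ℂ) - c₁‖ := abs_im_le_norm_sub c₁ t
      have hb₂ : m₂ ≤ ‖(t:ℂ) - c₂‖ := abs_im_le_norm_sub c₂ t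
      have key : m₁ * m₂ ≤ ‖(t:ℂ) - c₁‖ * ‖(t:ℂ) - c₂‖ :=
        mul_le_mul hb₁ hb₂ hm₂0.le (norm_nonneg _)
      have h1 : 1 + t^2 ≤ 1 + M^2 := by nlinarith [abs_nonneg t, _root_.sq_abs t]
      calc 1 + t^2 ≤ (1 + M^2) / (m₁ * m₂) * (m₁ * m₂) := by
            rw [div_mul_cancel₀ _ (by positivity)]; exact h1
        _ ≤ max 8 ((1 + M^2) / (m₁ * m₂)) * (‖(t:ℂ) - c₁‖ * ‖(t:ℂ) - c₂‖) := by
            apply mul_le_mul (le_max_right _ _) key (by positivity)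
            exact le_trans (by positivity) (le_max_left 8 _)
    · have ht2 : 2 ≤ |t| := le_trans hM2 htM.le
      have hno : ∀ c : ℂ, ‖c‖ ≤ M / 2 → |t| / 2 ≤ ‖(t:ℂ) - c‖ := by
        intro c hc
        have h3 : ‖(t:ℂ)‖ - ‖c‖ ≤ ‖(t:ℂ) - c‖ := norm_sub_norm_le _ _
        have h4 : ‖(t:ℂ)‖ = |t| := by simp
        have : ‖c‖ ≤ |t| / 2 := le_trans hc (by linarith)
        linarith [h3, h4 ▸ h3]
      have hc₁ : ‖c₁‖ ≤ M / 2 := by rw [hM]; linarith [norm_nonneg c₂]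
      have hc₂ : ‖c₂‖ ≤ M / 2 := by rw [hM]; linarith [norm_nonneg c₁]
      have key : |t|/2 * (|t|/2) ≤ ‖(t:ℂ) - c₁‖ * ‖(t:ℂ) - c₂‖ :=
        mul_le_mul (hno c₁ hc₁) (hno c₂ hc₂) (by positivity) (norm_nonneg _)
      calc 1 + t^2 ≤ 8 * (|t|/2 * (|t|/2)) := by nlinarith [_root_.sq_abs t]
        _ ≤ max 8 ((1 + M^2) / (m₁ * m₂)) * (‖(t:ℂ) - c₁‖ * ‖(t:ℂ) - c₂‖) :=
            mul_le_mul (le_max_left _ _) key (by positivity) (by positivity)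
  refine Integrable.mono' ((integrable_inv_one_add_sq).const_mul (D * C))
    hf.aestronglyMeasurable (Filter.Eventually.of_forall fun t => ?_)
  have h5 : D / (‖(t:ℂ) - c₁‖ * ‖(t:ℂ) - c₂‖) ≤ D * C * (1 + t^2)⁻¹ := by
    rw [div_le_iff₀ (hpos t)]
    have h6 := mul_le_mul_of_nonneg_left (hC t) hD
    have h7 : 0 < 1 + t^2 := by positivity
    calc D = D * ((1+t^2)⁻¹ * (1+t^2)) := by rw [inv_mul_cancel₀ h7.ne']; ring
      _ ≤ D * ((1+t^2)⁻¹ * (C * (‖(t:ℂ) - c₁‖ * ‖(t:ℂ) - c₂‖))) := by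
          apply mul_le_mul_of_nonneg_left _ hD
          exact mul_le_mul_of_nonneg_left (hC t) (by positivity)
      _ = D * (C * (1+t^2)⁻¹) * (‖(t:ℂ) - c₁‖ * ‖(t:ℂ) - c₂‖) := by ring
      _ = D * C * ((1+t^2)⁻¹ * (‖(t:ℂ) - c₁‖ * ‖(t:ℂ) - c₂‖)) := by ring
      _ = D * C * (1+t^2)⁻¹ * (‖(t:ℂ) - c₁‖ * ‖(t:ℂ) - c₂‖) := by ring
  exact (hb t).trans h5

section Basic

variable {a : ℕ → ℂ}

lemma one_add_sq_ne (ha2 : ∀ k, a k ^ 2 ≠ -1) (k : ℕ) : 1 + a k ^ 2 ≠ 0 := by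
  intro h
  exact ha2 k (by linear_combination h)

lemma chi_ne_zero (ha2 : ∀ k, a k ^ 2 ≠ -1) (k : ℕ) : chi a k ≠ 0 := by
  unfold chi
  apply div_ne_zero _ (one_add_sq_ne ha2 k)
  simpa [Complex.ofReal_eq_zero, map_eq_zero] using (one_add_sq_ne ha2 k)

lemma norm_chi (ha2 : ∀ k, a k ^ 2 ≠ -1) (k : ℕ) : ‖chi a k‖ = 1 := by
  unfold chi
  rw [norm_div]
  have h := one_add_sq_ne ha2 k
  rw [Complex.norm_real, Real.norm_eq_abs,
    _root_.abs_of_nonneg (norm_nonneg _)]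
  exact div_self (by simpa [map_eq_zero] using h)

lemma conj_sub_ne (ha : ∀ k, 0 < (a k).im) (k : ℕ) (t : ℝ) :
    (t : ℂ) - (starRingEnd ℂ) (a k) ≠ 0 :=
  sub_ne_of_im_ne (by simpa using (ha k).ne') t

lemma sub_a_ne (ha : ∀ k, 0 < (a k).im) (k : ℕ) (t : ℝ) : (t : ℂ) - a k ≠ 0 :=
  sub_ne_of_im_ne (ha k).ne' t

lemma norm_Blaschke (ha : ∀ k, 0 < (a k).im) (ha2 : ∀ k, a k ^ 2 ≠ -1) (j : ℕ) (t : ℝ) :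
    ‖Blaschke a j t‖ = 1 := by
  unfold Blaschke
  rw [norm_prod]
  apply Finset.prod_eq_one
  intro k _
  rw [norm_div, norm_mul, norm_chi ha2, norm_sub_conj, one_mul]
  exact div_self (by simpa using norm_pos_iff.2 (sub_a_ne ha k t) |>.ne')

lemma norm_Phi (ha : ∀ k, 0 < (a k).im) (ha2 : ∀ k, a k ^ 2 ≠ -1) (j : ℕ) (t : ℝ) :
    ‖Phi a j t‖ = Real.sqrt ((a j).im) / ‖(t:ℂ) - (starRingEnd ℂ) (a j)‖ := by
  unfold Phi
  rw [norm_div, norm_mul, norm_Blaschke ha ha2, mul_one]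
  congr 1
  rw [Complex.norm_real, Real.norm_eq_abs, _root_.abs_of_nonneg (Real.sqrt_nonneg _)]

lemma continuous_Blaschke (ha : ∀ k, 0 < (a k).im) (j : ℕ) :
    Continuous fun t : ℝ => Blaschke a j t := by
  unfold Blaschke
  apply continuous_finset_prod
  intro k _
  apply Continuous.div
  · exact (continuous_const.mul (Complex.continuous_ofReal.sub continuous_const))
  · exact (Complex.continuous_ofReal.sub continuous_const)
  · exact fun t => conj_sub_ne ha k t

lemma continuous_Phi (ha : ∀ k, 0 < (a k).im) (j : ℕ) :
    Continuous fun t : ℝ => Phi a j t := by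
  unfold Phi
  exact ((continuous_const.mul (continuous_Blaschke ha j)).div
    (Complex.continuous_ofReal.sub continuous_const) (fun t => conj_sub_ne ha j t))

lemma tau_conj_ne (ha : ∀ k, 0 < (a k).im) (n : ℕ) (t : ℝ) :
    tau n t (fun k => starRingEnd ℂ (a k)) ≠ 0 := by
  unfold tau
  exact Finset.prod_ne_zero_iff.2 fun k _ => conj_sub_ne ha k t

lemma continuous_Rker (A B : ℂ) (lam : ℝ) (hlam : 0 < lam) (n s : ℕ)
    (ha : ∀ k, 0 < (a k).im) : Continuous fun t : ℝ => Rker A B lam n s a t := by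
  unfold Rker
  apply Continuous.div
  · exact continuous_const.add (continuous_const.mul Complex.continuous_ofReal)
  · apply Continuous.mul
    · exact ((Complex.continuous_ofReal.pow 2).add continuous_const).pow _
    · unfold tau
      exact continuous_finset_prod _ fun k _ =>
        (Complex.continuous_ofReal.sub continuous_const)
  · intro t
    apply mul_ne_zero
    · apply pow_ne_zero
      intro h
      have h2 : ((t:ℝ)^2 + lam^2 : ℝ) = 0 := by
        rw [← Complex.ofReal_pow, ← Complex.ofReal_pow, ← Complex.ofReal_add] at h
        exact_mod_cast h
      nlinarith
    · exact tau_conj_ne ha n t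

end Basic

section Good

variable {a : ℕ → ℂ}

/-- A continuous function with `1/|t-c|` decay (a pole `c` off the real axis). -/
def L2good (f : ℝ → ℂ) : Prop :=
  Continuous f ∧ ∃ c D, c.im ≠ 0 ∧ ∀ t : ℝ, ‖f t‖ ≤ D / ‖(t:ℂ) - c‖

lemma L2good.integrable_mul_conj {f g : ℝ → ℂ} (hf : L2good f) (hg : L2good g) :
    Integrable fun t : ℝ => f t * (starRingEnd ℂ) (g t) := by
  obtain ⟨hfc, c₁, D₁, hc₁, hb₁⟩ := hf
  obtain ⟨hgc, c₂, D₂, hc₂, hb₂⟩ := hg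
  have hcont : Continuous fun t : ℝ => f t * (starRingEnd ℂ) (g t) :=
    hfc.mul (RCLike.continuous_conj.comp hgc)
  apply integrable_of_quad_decay hc₁ hc₂ hcont (D := D₁ * D₂)
  intro t
  rw [norm_mul, RCLike.norm_conj, ← div_mul_div_comm]
  exact mul_le_mul (hb₁ t) (hb₂ t) (norm_nonneg _) (le_trans (norm_nonneg _) (hb₁ t))

lemma L2good_Phi (ha : ∀ k, 0 < (a k).im) (ha2 : ∀ k, a k ^ 2 ≠ -1) (j : ℕ) :
    L2good (fun t : ℝ => Phi a j t) := by
  refine ⟨continuous_Phi ha j, starRingEnd ℂ (a j), Real.sqrt ((a j).im),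
    by simpa using (ha j).ne', fun t => ?_⟩
  rw [norm_Phi ha ha2 j t]

lemma L2good_Rker (A B : ℂ) {lam : ℝ} (hlam : 0 < lam) (n : ℕ) {s : ℕ} (hs : 1 ≤ s)
    (ha : ∀ k, 0 < (a k).im) : L2good (fun t : ℝ => Rker A B lam n s a t) := by
  set CAB : ℝ := ‖A‖/lam^2 + ‖B‖/(2*lam) with hCAB
  set Pi0 : ℝ := ∏ k ∈ Finset.range n, (a k).im with hPi0
  have hPi00 : 0 < Pi0 := Finset.prod_pos fun k _ => ha k
  have hCAB0 : 0 ≤ CAB := by positivity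
  refine ⟨continuous_Rker A B lam hlam n s ha, (lam:ℂ)*I,
    CAB / (lam^(2*s-1) * Pi0), by simp [hlam.ne'], fun t => ?_⟩
  set P : ℝ := t^2 + lam^2 with hPdef
  have hP : 0 < P := by positivity
  set N : ℝ := ‖(t:ℂ) - (lam:ℂ)*I‖ with hNdef
  have hN2 : N^2 = P := by
    rw [hNdef, Complex.sq_norm, Complex.normSq_apply]
    simp [hPdef]
    ring
  have hN0 : 0 < N := by
    rw [hNdef]
    exact norm_pos_iff.2 (sub_ne_of_im_ne (by simp [hlam.ne']) t)
  have hlamN : lam ≤ N := by nlinarith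
  have hPN : lam * N ≤ P := by nlinarith
  -- numerator bound
  have hnum : ‖A + B * (t:ℂ)‖ ≤ CAB * P := by
    have h1 : ‖A + B * (t:ℂ)‖ ≤ ‖A‖ + ‖B‖ * |t| := by
      refine (norm_add_le _ _).trans ?_
      rw [norm_mul]
      simp
    have h2 : lam^2 ≤ P := by nlinarith [sq_nonneg t]
    have h3 : 2 * lam * |t| ≤ P := by nlinarith [sq_nonneg (|t| - lam), _root_.sq_abs t]
    have := abs_nonneg t
    rw [hCAB]
    calc ‖A + B * (t:ℂ)‖ ≤ ‖A‖ + ‖B‖ * |t| := h1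
      _ ≤ ‖A‖/lam^2 * P + ‖B‖/(2*lam) * P := by
          apply add_le_add
          · rw [div_mul_eq_mul_div, le_div_iff₀ (by positivity)]
            nlinarith [norm_nonneg A]
          · rw [div_mul_eq_mul_div, le_div_iff₀ (by positivity)]
            nlinarith [norm_nonneg B]
      _ = (‖A‖/lam^2 + ‖B‖/(2*lam)) * P := by ring
  -- key power bound
  have hkey : lam^(2*s-1) * P * N ≤ P^(s+1) := by
    have e1 : P^(s+1) = P^(s-1) * P * P := by
      rw [← pow_succ, ← pow_succ]
      congr 1
      omega
    have e2 : (lam^2)^(s-1) ≤ P^(s-1) := pow_le_pow_left₀ (by positivity) (by nlinarith [sq_nonneg t]) _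
    have e3 : lam^(2*s-1) = (lam^2)^(s-1) * lam := by
      rw [← pow_mul, ← pow_succ]
      congr 1
      omega
    calc lam^(2*s-1) * P * N = (lam^2)^(s-1) * P * (lam * N) := by rw [e3]; ring
      _ ≤ P^(s-1) * P * (lam * N) := by
          apply mul_le_mul_of_nonneg_right (mul_le_mul_of_nonneg_right e2 hP.le) (by positivity)
      _ ≤ P^(s-1) * P * P := by
          apply mul_le_mul_of_nonneg_left hPN (by positivity)
      _ = P^(s+1) := e1.symm
  -- denominator facts
  have hden : ‖((t:ℂ)^2 + (lam:ℂ)^2)^(s+1) * tau n (t:ℂ) (fun k => starRingEnd ℂ (a k))‖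
      = P^(s+1) * ∏ k ∈ Finset.range n, ‖(t:ℂ) - starRingEnd ℂ (a k)‖ := by
    rw [norm_mul, norm_pow]
    congr 2
    · rw [show ((t:ℂ)^2 + (lam:ℂ)^2) = (((t^2 + lam^2 : ℝ)):ℂ) by push_cast; ring,
        Complex.norm_real, Real.norm_eq_abs]
      exact abs_of_pos hP
    · unfold tau
      exact norm_prod _ _
  have hprodge : Pi0 ≤ ∏ k ∈ Finset.range n, ‖(t:ℂ) - starRingEnd ℂ (a k)‖ := by
    apply Finset.prod_le_prod (fun k _ => (ha k).le)
    intro k _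
    have := abs_im_le_norm_sub (starRingEnd ℂ (a k)) t
    rwa [Complex.conj_im, abs_neg, _root_.abs_of_pos (ha k)] at this
  have hprod0 : 0 < ∏ k ∈ Finset.range n, ‖(t:ℂ) - starRingEnd ℂ (a k)‖ :=
    lt_of_lt_of_le hPi00 hprodge
  -- final
  unfold Rker
  rw [norm_div, hden, div_le_div_iff₀ (mul_pos (pow_pos hP _) hprod0) hN0, div_mul_eq_mul_div,
    le_div_iff₀ (mul_pos (pow_pos hlam _) hPi00)]
  calc ‖A + B * (t:ℂ)‖ * N * (lam^(2*s-1) * Pi0)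
      ≤ (CAB * P) * N * (lam^(2*s-1) * Pi0) := by
        apply mul_le_mul_of_nonneg_right (mul_le_mul_of_nonneg_right hnum hN0.le) (by positivity)
    _ = CAB * (lam^(2*s-1) * P * N) * Pi0 := by ring
    _ ≤ CAB * P^(s+1) * Pi0 := by
        apply mul_le_mul_of_nonneg_right (mul_le_mul_of_nonneg_left hkey hCAB0) hPi00.le
    _ ≤ CAB * P^(s+1) * ∏ k ∈ Finset.range n, ‖(t:ℂ) - starRingEnd ℂ (a k)‖ := by
        apply mul_le_mul_of_nonneg_left hprodge (by positivity)
    _ = CAB * (P^(s+1) * ∏ k ∈ Finset.range n, ‖(t:ℂ) - starRingEnd ℂ (a k)‖) := by ring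

end Good

section Cauchy

lemma integral_cauchy_density {x y : ℝ} (hy : 0 < y) :
    ∫ t : ℝ, y / ((t - x)^2 + y^2) = Real.pi := by
  have h1 : ∫ t : ℝ, y / ((t - x)^2 + y^2) = ∫ t : ℝ, y / (t^2 + y^2) :=
    integral_sub_right_eq_self (fun t => y / (t^2 + y^2)) x
  have h2 : ∫ t : ℝ, y / ((y*t)^2 + y^2) = |y⁻¹| • ∫ t : ℝ, y / (t^2+y^2) :=
    MeasureTheory.Measure.integral_comp_mul_left (fun t => y/(t^2+y^2)) y
  have h3 : ∫ t : ℝ, y / ((y*t)^2 + y^2) = y⁻¹ * Real.pi := by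
    rw [show (fun t : ℝ => y / ((y*t)^2 + y^2)) = fun t : ℝ => y⁻¹ * (1 + t^2)⁻¹ by
      funext t
      field_simp
      ring]
    rw [MeasureTheory.integral_const_mul, integral_univ_inv_one_add_sq]
  rw [h1]
  have h4 : |y⁻¹| = y⁻¹ := abs_of_pos (by positivity)
  rw [h4, smul_eq_mul] at h2
  have h5 := h2.symm.trans h3
  have hy' : y⁻¹ ≠ 0 := by positivity
  field_simp at h5
  linarith [h5]

lemma integral_zero_of_lower_decay (f : ℂ → ℂ)
    (hd : ∀ z : ℂ, z.im ≤ 0 → DifferentiableAt ℂ f z)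
    (hi : Integrable fun t : ℝ => f t)
    {C R₀ : ℝ} (hC : 0 ≤ C) (hR₀ : 1 ≤ R₀)
    (hb : ∀ z : ℂ, z.im ≤ 0 → R₀ ≤ ‖z‖ → ‖f z‖ ≤ C / ‖z‖^2) :
    ∫ t : ℝ, f t = 0 := by
  have key : ∀ R : ℝ, R₀ ≤ R → ‖∫ x in (-R)..R, f x‖ ≤ 4 * C / R := by
    intro R hR
    have hR1 : (1:ℝ) ≤ R := le_trans hR₀ hR
    have hR0 : (0:ℝ) < R := lt_of_lt_of_le one_pos hR1
    set zz : ℂ := ((-R : ℝ) : ℂ) + ((-R : ℝ) : ℂ) * I with hzz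
    set ww : ℂ := ((R : ℝ) : ℂ) + ((0 : ℝ) : ℂ) * I with hww
    have h1 : zz.re = -R := by simp [hzz]
    have h2 : zz.im = -R := by simp [hzz]
    have h3 : ww.re = R := by simp [hww]
    have h4 : ww.im = 0 := by simp [hww]
    have hdiff : DifferentiableOn ℂ f (Set.uIcc zz.re ww.re ×ℂ Set.uIcc zz.im ww.im) := by
      rw [h1, h2, h3, h4]
      intro p hp
      rw [Complex.mem_reProdIm] at hp
      have hpim : p.im ≤ 0 := by
        have := hp.2
        rw [Set.uIcc_of_le (by linarith : -R ≤ 0)] at this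
        exact (Set.mem_Icc.1 this).2
      exact (hd p hpim).differentiableWithinAt
    have H := Complex.integral_boundary_rect_eq_zero_of_differentiableOn f zz ww hdiff
    rw [h1, h2, h3, h4] at H
    simp only [Complex.ofReal_zero, zero_mul, add_zero] at H
    -- H : (∫ x in -R..R, f (x + (-R)*I)) - (∫ x in -R..R, f x)
    --     + I • (∫ y in -R..0, f (R + y*I)) - I • (∫ y in -R..0, f (-R + y*I)) = 0
    have hmain : (∫ x in (-R)..R, f x) =
        (∫ x in (-R)..R, f ((x:ℂ) + ((-R:ℝ):ℂ) * I))
        + I • (∫ y in (-R)..(0:ℝ), f (((R:ℝ):ℂ) + (y:ℂ) * I))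
        - I • (∫ y in (-R)..(0:ℝ), f (((-R:ℝ):ℂ) + (y:ℂ) * I)) := by
      have := H
      simp only [smul_eq_mul] at this ⊢
      linear_combination -this
    -- bounds
    have hbot : ‖∫ x in (-R)..R, f ((x:ℂ) + ((-R:ℝ):ℂ) * I)‖ ≤ C / R^2 * |R - (-R)| := by
      apply intervalIntegral.norm_integral_le_of_norm_le_const
      intro x hx
      set p : ℂ := (x:ℂ) + ((-R:ℝ):ℂ) * I with hp
      have hpim : p.im = -R := by simp [hp]
      have hpn : R ≤ ‖p‖ := by
        have := Complex.abs_im_le_norm p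
        rw [hpim] at this
        simpa [abs_of_pos hR0] using this
      have := hb p (by rw [hpim]; linarith) (le_trans hR hpn)
      refine this.trans ?_
      apply div_le_div_of_nonneg_left hC (by positivity)
      nlinarith
    have hside : ∀ xr : ℝ, |xr| = R →
        ‖∫ y in (-R)..(0:ℝ), f (((xr:ℝ):ℂ) + (y:ℂ) * I)‖ ≤ C / R^2 * |0 - (-R)| := by
      intro xr hxr
      apply intervalIntegral.norm_integral_le_of_norm_le_const
      intro y hy
      have hy' : y ∈ Set.Ioc (-R) 0 := by
        rwa [Set.uIoc_of_le (by linarith : -R ≤ 0)] at hy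
      set p : ℂ := ((xr:ℝ):ℂ) + (y:ℂ) * I with hp
      have hpim : p.im = y := by simp [hp]
      have hpre : p.re = xr := by simp [hp]
      have hpn : R ≤ ‖p‖ := by
        have := Complex.abs_re_le_norm p
        rw [hpre, hxr] at this
        simpa using this
      have := hb p (by rw [hpim]; exact hy'.2) (le_trans hR hpn)
      refine this.trans ?_
      apply div_le_div_of_nonneg_left hC (by positivity)
      nlinarith
    rw [hmain]
    have e1 := hside R (abs_of_pos hR0)
    have e2 := hside (-R) (by rw [abs_neg]; exact abs_of_pos hR0)
    have habs1 : |R - (-R)| = 2*R := by rw [abs_of_pos (by linarith)]; ring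
    have habs2 : |0 - (-R)| = R := by rw [abs_of_pos (by linarith)]; ring
    rw [habs1] at hbot
    rw [habs2] at e1 e2
    calc ‖_ + I • _ - I • _‖ ≤ ‖_ + I • _‖ + ‖I • _‖ := norm_sub_le _ _
      _ ≤ ‖_‖ + ‖I • _‖ + ‖I • _‖ := by gcongr; exact norm_add_le _ _
      _ ≤ C / R^2 * (2*R) + C/R^2*R + C/R^2*R := by
          rw [norm_smul, norm_smul]
          simp only [Complex.norm_I, one_mul]
          gcongr <;> assumption
      _ = 4 * C / R := by field_simp; ring
  -- take limits
  have hlim1 : Filter.Tendsto (fun R : ℝ => ∫ x in (-R)..R, f x) Filter.atTop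
      (nhds (∫ t : ℝ, f t)) :=
    MeasureTheory.intervalIntegral_tendsto_integral hi tendsto_neg_atTop_atBot tendsto_id
  have hlim2 : Filter.Tendsto (fun R : ℝ => ∫ x in (-R)..R, f x) Filter.atTop (nhds 0) := by
    refine squeeze_zero_norm' (a := fun R => 4 * C / R) ?_ ?_
    · filter_upwards [Filter.eventually_ge_atTop R₀] with R hR
      exact key R hR
    · exact Filter.Tendsto.div_atTop tendsto_const_nhds tendsto_id
  exact tendsto_nhds_unique hlim1 hlim2

end Cauchy

section Ortho

private lemma pow_ratio_aux (g x : ℝ) (hx : 0 < x) (d : ℕ) :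
    g * (2*x)^d / ((x/2)^(d+2)) = g * 2^(2*d+2) / x^2 := by
  have hx' : x ≠ 0 := hx.ne'
  rw [mul_pow, div_pow]
  rw [div_div_eq_mul_div, pow_add, pow_add, two_mul]
  field_simp
  ring

variable {a : ℕ → ℂ}

lemma integrable_phi_phi (ha : ∀ k, 0 < (a k).im) (ha2 : ∀ k, a k ^ 2 ≠ -1) (j k : ℕ) :
    Integrable fun t : ℝ => Phi a j t * (starRingEnd ℂ) (Phi a k t) :=
  (L2good_Phi ha ha2 j).integrable_mul_conj (L2good_Phi ha ha2 k)

lemma ortho_diag (ha : ∀ k, 0 < (a k).im) (ha2 : ∀ k, a k ^ 2 ≠ -1) (j : ℕ) :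
    ∫ t : ℝ, Phi a j t * (starRingEnd ℂ) (Phi a j t) = (Real.pi : ℂ) := by
  have hpt : ∀ t : ℝ, Phi a j t * (starRingEnd ℂ) (Phi a j t)
      = (((a j).im / ((t - (a j).re)^2 + (a j).im^2) : ℝ) : ℂ) := by
    intro t
    rw [Complex.mul_conj]
    congr 1
    have h1 : Complex.normSq (Phi a j t) = ‖Phi a j t‖^2 := by
      rw [← Complex.sq_norm]
    have h2 : ‖(t:ℂ) - (starRingEnd ℂ) (a j)‖^2 = (t - (a j).re)^2 + (a j).im^2 := by
      rw [Complex.sq_norm, Complex.normSq_apply]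
      simp only [Complex.sub_re, Complex.sub_im, Complex.conj_re, Complex.conj_im,
        Complex.ofReal_re, Complex.ofReal_im]
      ring
    rw [h1, norm_Phi ha ha2, div_pow, Real.sq_sqrt (ha j).le, h2]
  calc ∫ t : ℝ, Phi a j t * (starRingEnd ℂ) (Phi a j t)
      = ∫ t : ℝ, (((a j).im / ((t - (a j).re)^2 + (a j).im^2) : ℝ) : ℂ) :=
        integral_congr_ae (Filter.Eventually.of_forall hpt)
    _ = ((∫ t : ℝ, (a j).im / ((t - (a j).re)^2 + (a j).im^2) : ℝ) : ℂ) :=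
        integral_ofReal (f := fun t : ℝ => (a j).im / ((t - (a j).re)^2 + (a j).im^2))
    _ = (Real.pi : ℂ) := by rw [integral_cauchy_density (ha j)]

lemma ortho_off (ha : ∀ k, 0 < (a k).im) (ha2 : ∀ k, a k ^ 2 ≠ -1) {j k : ℕ} (hjk : j < k) :
    ∫ t : ℝ, Phi a j t * (starRingEnd ℂ) (Phi a k t) = 0 := by
  set γ : ℂ := (Real.sqrt ((a j).im) : ℂ) * (Real.sqrt ((a k).im) : ℂ) *
      (starRingEnd ℂ) (∏ m ∈ Finset.Ico j k, chi a m) with hγ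
  set F : ℂ → ℂ := fun z => γ * (∏ m ∈ Finset.Ico (j+1) k, (z - starRingEnd ℂ (a m))) /
      ((z - a k) * ∏ m ∈ Finset.Ico j k, (z - a m)) with hF
  -- pointwise identity on the real line
  have hpt : ∀ t : ℝ, Phi a j t * (starRingEnd ℂ) (Phi a k t) = F t := by
    intro t
    have h0 : ∀ m : ℕ, (t:ℂ) - a m ≠ 0 := fun m => sub_a_ne ha m t
    have h1 : ∀ m : ℕ, (t:ℂ) - starRingEnd ℂ (a m) ≠ 0 := fun m => conj_sub_ne ha m t
    have hBconj : (starRingEnd ℂ) (Blaschke a k t) =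
        ∏ m ∈ Finset.range k,
          ((starRingEnd ℂ) (chi a m) * ((t:ℂ) - (starRingEnd ℂ) (a m)) / ((t:ℂ) - a m)) := by
      unfold Blaschke
      rw [map_prod]
      refine Finset.prod_congr rfl fun m _ => ?_
      simp [map_div₀, map_mul, map_sub, Complex.conj_ofReal, Complex.conj_conj]
    have hBB : Blaschke a j t * (starRingEnd ℂ) (Blaschke a k t) =
        ∏ m ∈ Finset.Ico j k,
          ((starRingEnd ℂ) (chi a m) * ((t:ℂ) - (starRingEnd ℂ) (a m)) / ((t:ℂ) - a m)) := by
      rw [hBconj]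
      unfold Blaschke
      rw [← Finset.prod_range_mul_prod_Ico
        (fun m => (starRingEnd ℂ) (chi a m) * ((t:ℂ) - (starRingEnd ℂ) (a m)) / ((t:ℂ) - a m))
        hjk.le, ← mul_assoc, ← Finset.prod_mul_distrib]
      have hone : ∀ m ∈ Finset.range j,
          (chi a m * ((t:ℂ) - a m) / ((t:ℂ) - starRingEnd ℂ (a m))) *
            ((starRingEnd ℂ) (chi a m) * ((t:ℂ) - (starRingEnd ℂ) (a m)) / ((t:ℂ) - a m)) = 1 := by
        intro m _
        have hcc : chi a m * (starRingEnd ℂ) (chi a m) = 1 := by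
          rw [Complex.mul_conj, Complex.normSq_eq_norm_sq, norm_chi ha2 m]
          norm_num
        have hnum2 : chi a m * ((t:ℂ) - a m) * ((starRingEnd ℂ) (chi a m) *
            ((t:ℂ) - (starRingEnd ℂ) (a m)))
            = ((t:ℂ) - starRingEnd ℂ (a m)) * ((t:ℂ) - a m) := by
          linear_combination (((t:ℂ) - a m) * ((t:ℂ) - starRingEnd ℂ (a m))) * hcc
        rw [div_mul_div_comm, hnum2, div_self (mul_ne_zero (h1 m) (h0 m))]
      rw [Finset.prod_congr rfl hone, Finset.prod_const_one, one_mul]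
    have hconjPhi : (starRingEnd ℂ) (Phi a k t) =
        (Real.sqrt ((a k).im) : ℂ) * (starRingEnd ℂ) (Blaschke a k t) / ((t:ℂ) - a k) := by
      unfold Phi
      rw [map_div₀, map_mul, Complex.conj_ofReal, map_sub, Complex.conj_ofReal, Complex.conj_conj]
    have step1 : Phi a j t * (starRingEnd ℂ) (Phi a k t) =
        ((Real.sqrt ((a j).im) : ℂ) * (Real.sqrt ((a k).im) : ℂ)) *
          (Blaschke a j t * (starRingEnd ℂ) (Blaschke a k t)) /
          (((t:ℂ) - starRingEnd ℂ (a j)) * ((t:ℂ) - a k)) := by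
      rw [hconjPhi]
      unfold Phi
      field_simp [h1 j, h0 k]
    rw [step1, hBB]
    have hsplit : ∏ m ∈ Finset.Ico j k,
        ((starRingEnd ℂ) (chi a m) * ((t:ℂ) - (starRingEnd ℂ) (a m)) / ((t:ℂ) - a m)) =
        ((∏ m ∈ Finset.Ico j k, (starRingEnd ℂ) (chi a m)) *
          (((t:ℂ) - starRingEnd ℂ (a j)) * ∏ m ∈ Finset.Ico (j+1) k, ((t:ℂ) - starRingEnd ℂ (a m)))) /
          ∏ m ∈ Finset.Ico j k, ((t:ℂ) - a m) := by
      rw [Finset.prod_div_distrib, Finset.prod_mul_distrib,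
        Finset.prod_eq_prod_Ico_succ_bot hjk (fun m => (t:ℂ) - starRingEnd ℂ (a m))]
    rw [hsplit]
    simp only [hF]
    rw [hγ, map_prod]
    have hP1 : (∏ m ∈ Finset.Ico j k, ((t:ℂ) - a m)) ≠ 0 :=
      Finset.prod_ne_zero_iff.2 fun m _ => h0 m
    field_simp [hP1, h1 j, h0 k]
  -- integrability
  have hFi : Integrable fun t : ℝ => F t :=
    (integrable_phi_phi ha ha2 j k).congr (Filter.Eventually.of_forall hpt)
  -- differentiability on the closed lower half-plane
  have hdiff : ∀ z : ℂ, z.im ≤ 0 → DifferentiableAt ℂ F z := by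
    intro z hz
    have hne : ∀ m : ℕ, z - a m ≠ 0 := by
      intro m h
      have hzm : z = a m := by
        have := sub_eq_zero.1 h
        exact this
      rw [hzm] at hz
      linarith [ha m]
    apply DifferentiableAt.div
    · exact (differentiableAt_const γ).mul
        (DifferentiableAt.fun_finsetProd fun m _ => (differentiableAt_id.sub (differentiableAt_const _)))
    · exact ((differentiableAt_id.sub (differentiableAt_const _))).mul
        (DifferentiableAt.fun_finsetProd fun m _ => (differentiableAt_id.sub (differentiableAt_const _)))
    · exact mul_ne_zero (hne k) (Finset.prod_ne_zero_iff.2 fun m _ => hne m)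
  -- decay bound
  set d : ℕ := k - j - 1 with hdd
  set M : ℝ := 1 + ∑ m ∈ Finset.range (k+1), ‖a m‖ with hMdef
  have hsum0 : 0 ≤ ∑ m ∈ Finset.range (k+1), ‖a m‖ :=
    Finset.sum_nonneg fun i _ => norm_nonneg _
  have hM1 : 1 ≤ M := by rw [hMdef]; linarith
  have ham : ∀ m, m ≤ k → ‖a m‖ ≤ M := by
    intro m hm
    have h := Finset.single_le_sum (f := fun i => ‖a i‖) (fun i _ => norm_nonneg _)
      (Finset.mem_range.2 (Nat.lt_succ_of_le hm))
    rw [hMdef]; linarith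
  have hdecay : ∀ z : ℂ, z.im ≤ 0 → max (2*M) 1 ≤ ‖z‖ →
      ‖F z‖ ≤ (‖γ‖ * 2^(2*d+2)) / ‖z‖^2 := by
    intro z _ hz
    have hz1 : 2*M ≤ ‖z‖ := le_trans (le_max_left _ _) hz
    have hz0 : (0:ℝ) < ‖z‖ := lt_of_lt_of_le one_pos (le_trans (le_max_right _ _) hz)
    have hMz : M ≤ ‖z‖/2 := by linarith
    have hup : ∀ m ∈ Finset.Ico (j+1) k, ‖z - starRingEnd ℂ (a m)‖ ≤ 2*‖z‖ := by
      intro m hm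
      have hmk : m ≤ k := (Finset.mem_Ico.1 hm).2.le
      calc ‖z - starRingEnd ℂ (a m)‖ ≤ ‖z‖ + ‖starRingEnd ℂ (a m)‖ := norm_sub_le _ _
        _ = ‖z‖ + ‖a m‖ := by rw [RCLike.norm_conj]
        _ ≤ 2*‖z‖ := by have := ham m hmk; linarith
    have hlo : ∀ m, m ≤ k → ‖z‖/2 ≤ ‖z - a m‖ := by
      intro m hm
      have h5 := norm_sub_norm_le z (a m)
      have h6 := ham m hm
      linarith
    have hnum : ‖γ * ∏ m ∈ Finset.Ico (j+1) k, (z - starRingEnd ℂ (a m))‖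
        ≤ ‖γ‖ * (2*‖z‖)^d := by
      rw [norm_mul, norm_prod]
      apply mul_le_mul_of_nonneg_left _ (norm_nonneg γ)
      calc ∏ m ∈ Finset.Ico (j+1) k, ‖z - starRingEnd ℂ (a m)‖
          ≤ ∏ _m ∈ Finset.Ico (j+1) k, (2*‖z‖) :=
            Finset.prod_le_prod (fun m _ => norm_nonneg _) hup
        _ = (2*‖z‖)^d := by rw [Finset.prod_const, Nat.card_Ico]; congr 1
    have hden : (‖z‖/2)^(d+2) ≤ ‖(z - a k) * ∏ m ∈ Finset.Ico j k, (z - a m)‖ := by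
      rw [norm_mul, norm_prod]
      calc (‖z‖/2)^(d+2) = (‖z‖/2) * (‖z‖/2)^(k-j) := by
            rw [← pow_succ']
            congr 1
            omega
        _ ≤ ‖z - a k‖ * ∏ m ∈ Finset.Ico j k, ‖z - a m‖ := by
            apply mul_le_mul (hlo k le_rfl) ?_ (by positivity) (norm_nonneg _)
            calc (‖z‖/2)^(k-j) = ∏ _m ∈ Finset.Ico j k, (‖z‖/2) := by
                  rw [Finset.prod_const, Nat.card_Ico]
              _ ≤ ∏ m ∈ Finset.Ico j k, ‖z - a m‖ :=
                  Finset.prod_le_prod (fun _ _ => by positivity)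
                    (fun m hm => hlo m (Finset.mem_Ico.1 hm).2.le)
    have hden0 : (0:ℝ) < (‖z‖/2)^(d+2) := by positivity
    simp only [hF]
    rw [norm_div]
    calc ‖γ * ∏ m ∈ Finset.Ico (j+1) k, (z - starRingEnd ℂ (a m))‖ /
          ‖(z - a k) * ∏ m ∈ Finset.Ico j k, (z - a m)‖
        ≤ (‖γ‖ * (2*‖z‖)^d) / ((‖z‖/2)^(d+2)) := by
          apply div_le_div₀ (by positivity) hnum hden0 hden
      _ = (‖γ‖ * 2^(2*d+2)) / ‖z‖^2 := pow_ratio_aux ‖γ‖ ‖z‖ hz0 d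
  -- conclude
  calc ∫ t : ℝ, Phi a j t * (starRingEnd ℂ) (Phi a k t) = ∫ t : ℝ, F t :=
        integral_congr_ae (Filter.Eventually.of_forall hpt)
    _ = 0 := integral_zero_of_lower_decay F hdiff hFi (by positivity) (le_max_right _ _) hdecay

lemma ortho (ha : ∀ k, 0 < (a k).im) (ha2 : ∀ k, a k ^ 2 ≠ -1) (j k : ℕ) :
    ∫ t : ℝ, Phi a j t * (starRingEnd ℂ) (Phi a k t)
      = if j = k then (Real.pi : ℂ) else 0 := by
  rcases lt_trichotomy j k with h | h | h
  · rw [if_neg h.ne]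
    exact ortho_off ha ha2 h
  · rw [if_pos h, h]
    exact ortho_diag ha ha2 k
  · rw [if_neg h.ne']
    have h2 : ∫ t : ℝ, Phi a j t * (starRingEnd ℂ) (Phi a k t)
        = (starRingEnd ℂ) (∫ t : ℝ, Phi a k t * (starRingEnd ℂ) (Phi a j t)) := by
      rw [← integral_conj]
      apply integral_congr_ae
      filter_upwards with t
      rw [map_mul, Complex.conj_conj, mul_comm]
    rw [h2, ortho_off ha ha2 h, map_zero]

end Ortho

section Poly

/-- The numerator polynomial: `tau n z ā * Phi a j z = (Qpoly a n j).eval z`. -/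
noncomputable def Qpoly (a : ℕ → ℂ) (n j : ℕ) : Polynomial ℂ :=
  Polynomial.C ((Real.sqrt ((a j).im) : ℝ) : ℂ) *
    (∏ m ∈ Finset.range j, (Polynomial.C (chi a m) * (Polynomial.X - Polynomial.C (a m)))) *
    ∏ m ∈ Finset.Ico (j+1) n, (Polynomial.X - Polynomial.C (starRingEnd ℂ (a m)))

lemma Qpoly_natDegree_le (a : ℕ → ℂ) (n j : ℕ) :
    (Qpoly a n j).natDegree ≤ j + (n - (j+1)) := by
  unfold Qpoly
  refine le_trans (Polynomial.natDegree_mul_le) ?_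
  have h1 : (Polynomial.C ((Real.sqrt ((a j).im) : ℝ) : ℂ) *
      ∏ m ∈ Finset.range j,
        (Polynomial.C (chi a m) * (Polynomial.X - Polynomial.C (a m)))).natDegree ≤ j := by
    refine le_trans (Polynomial.natDegree_mul_le) ?_
    rw [Polynomial.natDegree_C]
    refine le_trans ?_ (le_of_eq (zero_add j))
    apply add_le_add_right
    refine le_trans (Polynomial.natDegree_prod_le _ _) ?_
    refine le_trans (Finset.sum_le_sum (g := fun _ => 1) fun m _ => ?_) ?_
    · refine le_trans (Polynomial.natDegree_mul_le) ?_
      rw [Polynomial.natDegree_C]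
      simp [Polynomial.natDegree_X_sub_C]
    · simp
  have h2 : (∏ m ∈ Finset.Ico (j+1) n,
      (Polynomial.X - Polynomial.C (starRingEnd ℂ (a m)))).natDegree ≤ n - (j+1) := by
    refine le_trans (Polynomial.natDegree_prod_le _ _) ?_
    refine le_trans (Finset.sum_le_sum (g := fun _ => 1) fun m _ => ?_) ?_
    · simp [Polynomial.natDegree_X_sub_C]
    · simp [Nat.card_Ico]
  omega

lemma Qpoly_degree_lt (a : ℕ → ℂ) {n j : ℕ} (hj : j < n) :
    (Qpoly a n j).degree < (n : ℕ) := by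
  refine lt_of_le_of_lt (Polynomial.degree_le_natDegree) ?_
  have h := Qpoly_natDegree_le a n j
  have h2 : (Qpoly a n j).natDegree < n := by omega
  exact_mod_cast h2

lemma Qpoly_eval {a : ℕ → ℂ} (ha : ∀ k, 0 < (a k).im) {n j : ℕ} (hj : j < n) (z : ℂ)
    (hz : ∀ k < n, z ≠ starRingEnd ℂ (a k)) :
    (Qpoly a n j).eval z = tau n z (fun k => starRingEnd ℂ (a k)) * Phi a j z := by
  have hzk : ∀ k, k < n → z - starRingEnd ℂ (a k) ≠ 0 := fun k hk => sub_ne_zero.2 (hz k hk)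
  unfold Qpoly tau Phi Blaschke
  rw [Polynomial.eval_mul, Polynomial.eval_mul, Polynomial.eval_C, Polynomial.eval_prod,
    Polynomial.eval_prod]
  simp only [Polynomial.eval_mul, Polynomial.eval_sub, Polynomial.eval_X, Polynomial.eval_C]
  rw [← Finset.prod_range_mul_prod_Ico (fun m => z - starRingEnd ℂ (a m)) hj.le,
    Finset.prod_eq_prod_Ico_succ_bot hj (fun m => z - starRingEnd ℂ (a m)),
    Finset.prod_div_distrib]
  have hne1 : (∏ m ∈ Finset.range j, (z - starRingEnd ℂ (a m))) ≠ 0 :=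
    Finset.prod_ne_zero_iff.2 fun m hm => hzk m (lt_of_lt_of_le (Finset.mem_range.1 hm) hj.le)
  have hne2 : z - starRingEnd ℂ (a j) ≠ 0 := hzk j hj
  field_simp

lemma Qpoly_shift (a : ℕ → ℂ) (n j : ℕ) :
    Qpoly a (n+1) (j+1) = Polynomial.C (chi a 0) * (Polynomial.X - Polynomial.C (a 0)) *
      Qpoly (fun k => a (k+1)) n j := by
  unfold Qpoly
  rw [Finset.prod_range_succ']
  have hIco : ∏ m ∈ Finset.Ico (j+1+1) (n+1),
      (Polynomial.X - Polynomial.C (starRingEnd ℂ (a m)))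
      = ∏ m ∈ Finset.Ico (j+1) n,
        (Polynomial.X - Polynomial.C (starRingEnd ℂ (a (m+1)))) := by
    rw [Finset.prod_Ico_eq_prod_range, Finset.prod_Ico_eq_prod_range]
    rw [show n + 1 - (j+1+1) = n - (j+1) by omega]
    refine Finset.prod_congr rfl fun i _ => ?_
    rw [show j + 1 + 1 + i = j + 1 + i + 1 by omega]
  rw [hIco]
  have hchi : ∀ m : ℕ, chi (fun k => a (k+1)) m = chi a (m+1) := fun m => rfl
  simp only [hchi]
  ring

lemma rep_exists : ∀ (n : ℕ) (a : ℕ → ℂ), (∀ k, 0 < (a k).im) → (∀ k, a k ^ 2 ≠ -1) →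
    ∀ p : Polynomial ℂ, p.degree < (n : ℕ) → ∃ c : ℕ → ℂ,
      p = ∑ j ∈ Finset.range n, Polynomial.C (c j) * Qpoly a n j := by
  intro n
  induction n with
  | zero =>
    intro a _ _ p hp
    refine ⟨fun _ => 0, ?_⟩
    have h0 : p = 0 := by
      rw [← Polynomial.degree_eq_bot]
      have := hp
      rw [Nat.cast_zero] at this
      exact Nat.WithBot.lt_zero_iff.mp this
    rw [Finset.sum_range_zero, h0]
  | succ n ih =>
    intro a ha ha2 p hp
    have hQ0eval : (Qpoly a (n+1) 0).eval (a 0) ≠ 0 := by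
      unfold Qpoly
      rw [Polynomial.eval_mul, Polynomial.eval_mul, Polynomial.eval_C, Polynomial.eval_prod,
        Polynomial.eval_prod]
      simp only [Finset.range_zero, Finset.prod_empty, mul_one, Polynomial.eval_sub,
        Polynomial.eval_X, Polynomial.eval_C]
      apply mul_ne_zero
      · rw [Complex.ofReal_ne_zero]
        exact (Real.sqrt_pos.2 (ha 0)).ne'
      · refine Finset.prod_ne_zero_iff.2 fun m _ => sub_ne_zero.2 ?_
        intro h
        have h2 := congrArg Complex.im h
        rw [Complex.conj_im] at h2
        linarith [ha 0, ha m]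
    obtain ⟨c0, hc0⟩ : ∃ c : ℂ, c = p.eval (a 0) / (Qpoly a (n+1) 0).eval (a 0) := ⟨_, rfl⟩
    have hroot : (p - Polynomial.C c0 * Qpoly a (n+1) 0).IsRoot (a 0) := by
      unfold Polynomial.IsRoot
      rw [Polynomial.eval_sub, Polynomial.eval_mul, Polynomial.eval_C, hc0,
        div_mul_cancel₀ _ hQ0eval, sub_self]
    obtain ⟨p₁, hp₁⟩ := Polynomial.dvd_iff_isRoot.2 hroot
    have hdegsub : (p - Polynomial.C c0 * Qpoly a (n+1) 0).degree < ((n+1 : ℕ) : WithBot ℕ) := by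
      refine lt_of_le_of_lt (Polynomial.degree_sub_le _ _) ?_
      rw [max_lt_iff]
      refine ⟨by exact_mod_cast hp, ?_⟩
      refine lt_of_le_of_lt (Polynomial.degree_mul_le _ _) ?_
      refine lt_of_le_of_lt (add_le_add_left Polynomial.degree_C_le _) ?_
      rw [zero_add]
      exact Qpoly_degree_lt a (by omega : 0 < n+1)
    have hdeg1 : p₁.degree < (n : ℕ) := by
      by_cases hzero : p₁ = 0
      · rw [hzero, Polynomial.degree_zero]
        exact WithBot.bot_lt_coe _
      · rw [hp₁, Polynomial.degree_mul, Polynomial.degree_X_sub_C,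
          Polynomial.degree_eq_natDegree hzero] at hdegsub
        have hh : 1 + p₁.natDegree < n + 1 := by exact_mod_cast hdegsub
        rw [Polynomial.degree_eq_natDegree hzero]
        have hlt : p₁.natDegree < n := by omega
        exact_mod_cast hlt
    obtain ⟨c', hc'⟩ := ih (fun k => a (k+1)) (fun k => ha (k+1)) (fun k => ha2 (k+1)) p₁ hdeg1
    have hchi0 : chi a 0 ≠ 0 := chi_ne_zero ha2 0
    refine ⟨fun m => if m = 0 then c0 else c' (m-1) * (chi a 0)⁻¹, ?_⟩
    have hsum : ∀ i ∈ Finset.range n,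
        Polynomial.C (if i + 1 = 0 then c0 else c' (i+1-1) * (chi a 0)⁻¹) *
          Qpoly a (n+1) (i+1)
        = (Polynomial.X - Polynomial.C (a 0)) *
            (Polynomial.C (c' i) * Qpoly (fun k => a (k+1)) n i) := by
      intro i _
      rw [if_neg (by omega)]
      simp only [Nat.add_sub_cancel]
      rw [Qpoly_shift]
      have hCC : Polynomial.C (c' i * (chi a 0)⁻¹) * Polynomial.C (chi a 0)
          = Polynomial.C (c' i) := by
        rw [← Polynomial.C_mul]
        congr 1
        field_simp
      calc Polynomial.C (c' i * (chi a 0)⁻¹) *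
            (Polynomial.C (chi a 0) * (Polynomial.X - Polynomial.C (a 0)) *
              Qpoly (fun k => a (k+1)) n i)
          = (Polynomial.C (c' i * (chi a 0)⁻¹) * Polynomial.C (chi a 0)) *
            ((Polynomial.X - Polynomial.C (a 0)) * Qpoly (fun k => a (k+1)) n i) := by ring
        _ = (Polynomial.X - Polynomial.C (a 0)) *
            (Polynomial.C (c' i) * Qpoly (fun k => a (k+1)) n i) := by rw [hCC]; ring
    rw [Finset.sum_range_succ']
    rw [Finset.sum_congr rfl hsum, ← Finset.mul_sum, ← hc', ← hp₁]
    have hif : (if (0:ℕ) = 0 then c0 else c' (0-1) * (chi a 0)⁻¹) = c0 := if_pos rfl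
    rw [show (fun m => if m = 0 then c0 else c' (m-1) * (chi a 0)⁻¹) 0 = c0 from hif]
    ring

section Main

/-- Error function `R - Σ c_j Φ_j`. -/
noncomputable def FF (A B : ℂ) (lam : ℝ) (n s : ℕ) (a : ℕ → ℂ) (c : ℕ → ℂ) (t : ℝ) : ℂ :=
  Rker A B lam n s a t - ∑ j ∈ Finset.range n, c j * Phi a j t

/-- Fourier coefficients of `R`. -/
noncomputable def Rhat (A B : ℂ) (lam : ℝ) (n s : ℕ) (a : ℕ → ℂ) (j : ℕ) : ℂ :=
  (1 / Real.pi : ℂ) * ∫ t : ℝ, Rker A B lam n s a t * (starRingEnd ℂ) (Phi a j t)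

lemma Sn_eq (A B : ℂ) (lam : ℝ) (n s : ℕ) (a : ℕ → ℂ) (z : ℂ) :
    Sn A B lam n s a z = ∑ j ∈ Finset.range n, Rhat A B lam n s a j * Phi a j z := rfl

lemma re_mul_conj (z : ℂ) : (z * (starRingEnd ℂ) z).re = ‖z‖^2 := by
  have h : (z * (starRingEnd ℂ) z).re = Complex.normSq z := by
    rw [Complex.mul_conj]
    simp
  rw [h, Complex.normSq_eq_norm_sq]

lemma norm_sub_sq_c (x y : ℂ) :
    ‖x - y‖^2 = ‖x‖^2 + ‖y‖^2 - 2*(x * (starRingEnd ℂ) y).re := by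
  have h := Complex.normSq_sub x y
  rw [Complex.normSq_eq_norm_sq, Complex.normSq_eq_norm_sq, Complex.normSq_eq_norm_sq] at h
  simpa using h

variable {a : ℕ → ℂ} {lam : ℝ} {n s : ℕ}

lemma int_good_conj_FF (A B : ℂ) (ha : ∀ k, 0 < (a k).im) (ha2 : ∀ k, a k ^ 2 ≠ -1)
    (hlam : 0 < lam) (hs : 1 ≤ s) {f : ℝ → ℂ} (hf : L2good f) (c : ℕ → ℂ) :
    Integrable fun t : ℝ => f t * (starRingEnd ℂ) (FF A B lam n s a c t) := by
  have heq : (fun t : ℝ => f t * (starRingEnd ℂ) (FF A B lam n s a c t))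
      = fun t : ℝ => f t * (starRingEnd ℂ) (Rker A B lam n s a t)
          - ∑ j ∈ Finset.range n,
              (starRingEnd ℂ) (c j) * (f t * (starRingEnd ℂ) (Phi a j t)) := by
    funext t
    simp only [FF, map_sub, map_sum, map_mul]
    rw [mul_sub, Finset.mul_sum]
    congr 1
    exact Finset.sum_congr rfl fun j _ => by ring
  rw [heq]
  exact (hf.integrable_mul_conj (L2good_Rker A B hlam n hs ha)).sub
    (integrable_finset_sum _ fun j _ =>
      ((hf.integrable_mul_conj (L2good_Phi ha ha2 j)).const_mul _))

lemma int_FF_conj_good (A B : ℂ) (ha : ∀ k, 0 < (a k).im) (ha2 : ∀ k, a k ^ 2 ≠ -1)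
    (hlam : 0 < lam) (hs : 1 ≤ s) {f : ℝ → ℂ} (hf : L2good f) (c : ℕ → ℂ) :
    Integrable fun t : ℝ => FF A B lam n s a c t * (starRingEnd ℂ) (f t) := by
  have heq : (fun t : ℝ => FF A B lam n s a c t * (starRingEnd ℂ) (f t))
      = fun t : ℝ => Rker A B lam n s a t * (starRingEnd ℂ) (f t)
          - ∑ j ∈ Finset.range n, c j * (Phi a j t * (starRingEnd ℂ) (f t)) := by
    funext t
    simp only [FF]
    rw [sub_mul, Finset.sum_mul]
    congr 1
    exact Finset.sum_congr rfl fun j _ => by ring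
  rw [heq]
  exact ((L2good_Rker A B hlam n hs ha).integrable_mul_conj hf).sub
    (integrable_finset_sum _ fun j _ =>
      (((L2good_Phi ha ha2 j).integrable_mul_conj hf).const_mul _))

lemma int_FF_conj_FF (A B : ℂ) (ha : ∀ k, 0 < (a k).im) (ha2 : ∀ k, a k ^ 2 ≠ -1)
    (hlam : 0 < lam) (hs : 1 ≤ s) (c c' : ℕ → ℂ) :
    Integrable fun t : ℝ =>
      FF A B lam n s a c t * (starRingEnd ℂ) (FF A B lam n s a c' t) := by
  have heq : (fun t : ℝ => FF A B lam n s a c t * (starRingEnd ℂ) (FF A B lam n s a c' t))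
      = fun t : ℝ => Rker A B lam n s a t * (starRingEnd ℂ) (FF A B lam n s a c' t)
          - ∑ j ∈ Finset.range n,
              c j * (Phi a j t * (starRingEnd ℂ) (FF A B lam n s a c' t)) := by
    funext t
    simp only [FF]
    rw [sub_mul, Finset.sum_mul]
    congr 1
    exact Finset.sum_congr rfl fun j _ => by ring
  rw [heq]
  exact (int_good_conj_FF A B ha ha2 hlam hs (L2good_Rker A B hlam n hs ha) c').sub
    (integrable_finset_sum _ fun j _ =>
      ((int_good_conj_FF A B ha ha2 hlam hs (L2good_Phi ha ha2 j) c').const_mul _))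

lemma int_FF_normsq (A B : ℂ) (ha : ∀ k, 0 < (a k).im) (ha2 : ∀ k, a k ^ 2 ≠ -1)
    (hlam : 0 < lam) (hs : 1 ≤ s) (c : ℕ → ℂ) :
    Integrable fun t : ℝ => ‖FF A B lam n s a c t‖^2 := by
  have h := (int_FF_conj_FF (n := n) A B ha ha2 hlam hs c c).re
  refine h.congr (Filter.Eventually.of_forall fun t => ?_)
  exact re_mul_conj _

lemma Rhat_spec (A B : ℂ) (lam : ℝ) (n s : ℕ) (a : ℕ → ℂ) (j : ℕ) :
    ∫ t : ℝ, Rker A B lam n s a t * (starRingEnd ℂ) (Phi a j t)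
      = (Real.pi : ℂ) * Rhat A B lam n s a j := by
  unfold Rhat
  rw [← mul_assoc]
  have hpi : (Real.pi : ℂ) ≠ 0 := Complex.ofReal_ne_zero.2 Real.pi_ne_zero
  field_simp

lemma integral_FF_Rhat_phi (A B : ℂ) (ha : ∀ k, 0 < (a k).im) (ha2 : ∀ k, a k ^ 2 ≠ -1)
    (hlam : 0 < lam) (hs : 1 ≤ s) {j : ℕ} (hj : j < n) :
    ∫ t : ℝ, FF A B lam n s a (Rhat A B lam n s a) t * (starRingEnd ℂ) (Phi a j t) = 0 := by
  have heq : (fun t : ℝ =>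
      FF A B lam n s a (Rhat A B lam n s a) t * (starRingEnd ℂ) (Phi a j t))
      = fun t : ℝ => Rker A B lam n s a t * (starRingEnd ℂ) (Phi a j t)
          - ∑ m ∈ Finset.range n,
              Rhat A B lam n s a m * (Phi a m t * (starRingEnd ℂ) (Phi a j t)) := by
    funext t
    simp only [FF]
    rw [sub_mul, Finset.sum_mul]
    congr 1
    exact Finset.sum_congr rfl fun m _ => by ring
  rw [heq]
  rw [integral_sub ((L2good_Rker A B hlam n hs ha).integrable_mul_conj (L2good_Phi ha ha2 j))
    (integrable_finset_sum _ fun m _ => ((integrable_phi_phi ha ha2 m j).const_mul _))]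
  rw [integral_finset_sum _ fun m _ => ((integrable_phi_phi ha ha2 m j).const_mul _)]
  have hsum : ∀ m ∈ Finset.range n,
      (∫ t : ℝ, Rhat A B lam n s a m * (Phi a m t * (starRingEnd ℂ) (Phi a j t)))
      = if m = j then Rhat A B lam n s a m * (Real.pi : ℂ) else 0 := by
    intro m _
    rw [MeasureTheory.integral_const_mul, ortho ha ha2 m j]
    split_ifs with h
    · rfl
    · rw [mul_zero]
  rw [Finset.sum_congr rfl hsum, Finset.sum_ite_eq' (Finset.range n) j
    (fun m => Rhat A B lam n s a m * (Real.pi : ℂ)), if_pos (Finset.mem_range.2 hj),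
    Rhat_spec]
  ring

lemma key_ineq (A B : ℂ) (ha : ∀ k, 0 < (a k).im) (ha2 : ∀ k, a k ^ 2 ≠ -1)
    (hlam : 0 < lam) (hs : 1 ≤ s) (c : ℕ → ℂ) :
    (∫ t : ℝ, ‖FF A B lam n s a (Rhat A B lam n s a) t‖^2)
      ≤ ∫ t : ℝ, ‖FF A B lam n s a c t‖^2 := by
  classical
  set d : ℕ → ℂ := fun j => c j - Rhat A B lam n s a j with hd
  set G : ℝ → ℂ := fun t => ∑ j ∈ Finset.range n, d j * Phi a j t with hG
  have hdiff_eq : ∀ t : ℝ, FF A B lam n s a (Rhat A B lam n s a) t - FF A B lam n s a c t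
      = G t := by
    intro t
    simp only [FF, hG, hd]
    rw [show (∑ x ∈ Finset.range n, (c x - Rhat A B lam n s a x) * Phi a x t)
        = (∑ x ∈ Finset.range n, c x * Phi a x t)
          - ∑ x ∈ Finset.range n, Rhat A B lam n s a x * Phi a x t from by
      rw [← Finset.sum_sub_distrib]
      exact Finset.sum_congr rfl fun j _ => by ring]
    ring
  -- pointwise expansion
  have hpt : ∀ t : ℝ, ‖FF A B lam n s a c t‖^2
      = ‖FF A B lam n s a (Rhat A B lam n s a) t‖^2 + ‖G t‖^2
        - 2*((FF A B lam n s a (Rhat A B lam n s a) t) * (starRingEnd ℂ) (G t)).re := by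
    intro t
    rw [← hdiff_eq t, ← norm_sub_sq_c]
    congr 1
    ring
  -- integrability facts
  have hGG : Integrable fun t : ℝ => G t * (starRingEnd ℂ) (G t) := by
    have heq : (fun t : ℝ => G t * (starRingEnd ℂ) (G t))
        = fun t : ℝ => ∑ j ∈ Finset.range n, ∑ k ∈ Finset.range n,
            (d j * (starRingEnd ℂ) (d k)) * (Phi a j t * (starRingEnd ℂ) (Phi a k t)) := by
      funext t
      simp only [hG, map_sum, map_mul]
      rw [Finset.sum_mul_sum]
      refine Finset.sum_congr rfl fun j _ => Finset.sum_congr rfl fun k _ => by ring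
    rw [heq]
    exact integrable_finset_sum _ fun j _ => integrable_finset_sum _ fun k _ =>
      ((integrable_phi_phi ha ha2 j k).const_mul _)
  have hGsq : Integrable fun t : ℝ => ‖G t‖^2 :=
    hGG.re.congr (Filter.Eventually.of_forall fun t => re_mul_conj _)
  have hFG : Integrable fun t : ℝ =>
      FF A B lam n s a (Rhat A B lam n s a) t * (starRingEnd ℂ) (G t) := by
    have heq : (fun t : ℝ =>
        FF A B lam n s a (Rhat A B lam n s a) t * (starRingEnd ℂ) (G t))
        = fun t : ℝ => ∑ k ∈ Finset.range n, (starRingEnd ℂ) (d k) *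
            (FF A B lam n s a (Rhat A B lam n s a) t * (starRingEnd ℂ) (Phi a k t)) := by
      funext t
      simp only [hG, map_sum, map_mul]
      rw [Finset.mul_sum]
      exact Finset.sum_congr rfl fun k _ => by ring
    rw [heq]
    exact integrable_finset_sum _ fun k _ =>
      ((int_FF_conj_good A B ha ha2 hlam hs (L2good_Phi ha ha2 k) _).const_mul _)
  have hFGre : Integrable fun t : ℝ =>
      (FF A B lam n s a (Rhat A B lam n s a) t * (starRingEnd ℂ) (G t)).re := hFG.re
  have hFsq : Integrable fun t : ℝ => ‖FF A B lam n s a (Rhat A B lam n s a) t‖^2 :=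
    int_FF_normsq A B ha ha2 hlam hs _
  -- the cross term vanishes
  have hcross : (∫ t : ℝ, FF A B lam n s a (Rhat A B lam n s a) t * (starRingEnd ℂ) (G t))
      = 0 := by
    have heq : (fun t : ℝ =>
        FF A B lam n s a (Rhat A B lam n s a) t * (starRingEnd ℂ) (G t))
        = fun t : ℝ => ∑ k ∈ Finset.range n, (starRingEnd ℂ) (d k) *
            (FF A B lam n s a (Rhat A B lam n s a) t * (starRingEnd ℂ) (Phi a k t)) := by
      funext t
      simp only [hG, map_sum, map_mul]
      rw [Finset.mul_sum]
      exact Finset.sum_congr rfl fun k _ => by ring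
    rw [heq]
    rw [integral_finset_sum _ fun k _ =>
      ((int_FF_conj_good A B ha ha2 hlam hs (L2good_Phi ha ha2 k) _).const_mul _)]
    refine Finset.sum_eq_zero fun k hk => ?_
    rw [MeasureTheory.integral_const_mul, integral_FF_Rhat_phi A B ha ha2 hlam hs (Finset.mem_range.1 hk),
      mul_zero]
  have hcrossre : (∫ t : ℝ,
      (FF A B lam n s a (Rhat A B lam n s a) t * (starRingEnd ℂ) (G t)).re) = 0 := by
    have h := integral_re hFG
    rw [hcross] at h
    simpa using h
  -- put it together
  have hsplit : (∫ t : ℝ, ‖FF A B lam n s a c t‖^2)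
      = (∫ t : ℝ, ‖FF A B lam n s a (Rhat A B lam n s a) t‖^2) + (∫ t : ℝ, ‖G t‖^2)
        - 2 * ∫ t : ℝ,
            (FF A B lam n s a (Rhat A B lam n s a) t * (starRingEnd ℂ) (G t)).re := by
    have hadd : Integrable (fun t : ℝ =>
        ‖FF A B lam n s a (Rhat A B lam n s a) t‖^2 + ‖G t‖^2) := hFsq.add hGsq
    rw [integral_congr_ae (Filter.Eventually.of_forall hpt),
      integral_sub hadd (hFGre.const_mul 2),
      integral_add hFsq hGsq, MeasureTheory.integral_const_mul]
  have hGnonneg : 0 ≤ ∫ t : ℝ, ‖G t‖^2 :=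
    integral_nonneg fun t => sq_nonneg _
  rw [hsplit, hcrossre]
  linarith

end Main

/-- Theorem 2 (extremal polynomial): p_{n−1}^{(λ,s)}(z) := τ_n(z,ā) S_n(R_{n,s}^λ)(z)
coincides with a polynomial of degree ≤ n−1 (away from the points conj(a_k), where the
defining expression involves division by zero), and it attains the infimum defining the
best weighted approximation. -/
theorem stmt_6 (A B lam : ℝ) (hlam : 0 < lam) (n s : ℕ) (hn : 1 ≤ n) (hs : 1 ≤ s)
    (a : ℕ → ℂ) (ha : ∀ k, 0 < (a k).im) (ha2 : ∀ k, a k ^ 2 ≠ -1)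
    (rho0 : ℂ) (hrho0 : rho0 ≠ 0) :
    (∃ q : Polynomial ℂ, q.degree < (n : ℕ) ∧
      ∀ z : ℂ, (∀ k < n, z ≠ starRingEnd ℂ (a k)) →
        q.eval z = tau n z (fun k => starRingEnd ℂ (a k)) * Sn (A : ℂ) (B : ℂ) lam n s a z) ∧
    (∫ t : ℝ, ‖Kker (A : ℂ) (B : ℂ) lam s t -
          tau n t (fun k => starRingEnd ℂ (a k)) * Sn (A : ℂ) (B : ℂ) lam n s a t‖ ^ 2 /
        ‖rho0 * tau n t a‖ ^ 2) =
      sInf {y : ℝ | ∃ p : Polynomial ℂ, p.degree < (n : ℕ) ∧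
        y = ∫ t : ℝ, ‖Kker (A : ℂ) (B : ℂ) lam s t - p.eval (t : ℂ)‖ ^ 2 /
              ‖rho0 * tau n t a‖ ^ 2} := by
  classical
  have habs_tau : ∀ t : ℝ, ‖tau n t (fun k => starRingEnd ℂ (a k))‖
      = ‖tau n t a‖ := by
    intro t
    unfold tau
    rw [norm_prod, norm_prod]
    exact Finset.prod_congr rfl fun k _ => norm_sub_conj (a k) t
  have htauconj_ne : ∀ t : ℝ, tau n (t:ℂ) (fun k => starRingEnd ℂ (a k)) ≠ 0 :=
    tau_conj_ne ha n
  have htaua_ne : ∀ t : ℝ, tau n (t:ℂ) a ≠ 0 := fun t => by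
    unfold tau
    exact Finset.prod_ne_zero_iff.2 fun k _ => sub_a_ne ha k t
  have hK : ∀ t : ℝ, Kker (A:ℂ) (B:ℂ) lam s t
      = tau n t (fun k => starRingEnd ℂ (a k)) * Rker (A:ℂ) (B:ℂ) lam n s a t := by
    intro t
    unfold Kker Rker
    have hD : ((t:ℂ)^2 + (lam:ℂ)^2)^(s+1) ≠ 0 := by
      apply pow_ne_zero
      intro h
      rw [← Complex.ofReal_pow, ← Complex.ofReal_pow, ← Complex.ofReal_add] at h
      have h2 : t^2 + lam^2 = 0 := by exact_mod_cast h
      nlinarith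
    field_simp [hD, htauconj_ne t]
  have hpoint : ∀ (t : ℝ) (G : ℂ),
      ‖Kker (A:ℂ) (B:ℂ) lam s t
          - tau n t (fun k => starRingEnd ℂ (a k)) * G‖^2
        / ‖rho0 * tau n t a‖^2
      = ‖Rker (A:ℂ) (B:ℂ) lam n s a t - G‖^2 * (‖rho0‖^2)⁻¹ := by
    intro t G
    rw [hK t, ← mul_sub, norm_mul, norm_mul, mul_pow, mul_pow, habs_tau t]
    have h1 : ‖tau n t a‖ ≠ 0 := by
      simpa [map_eq_zero] using htaua_ne t
    have h2 : ‖rho0‖ ≠ 0 := by simpa [map_eq_zero] using hrho0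
    field_simp
  -- the extremal polynomial
  set q : Polynomial ℂ := ∑ j ∈ Finset.range n,
    Polynomial.C (Rhat (A:ℂ) (B:ℂ) lam n s a j) * Qpoly a n j with hq
  have hqdeg : q.degree < (n:ℕ) := by
    refine lt_of_le_of_lt (Polynomial.degree_sum_le _ _) ?_
    refine (Finset.sup_lt_iff (WithBot.bot_lt_coe n)).mpr fun j hj => ?_
    refine lt_of_le_of_lt (Polynomial.degree_mul_le _ _) ?_
    refine lt_of_le_of_lt (add_le_add_left Polynomial.degree_C_le _) ?_
    rw [zero_add]
    exact Qpoly_degree_lt a (Finset.mem_range.1 hj)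
  have hqeval : ∀ z : ℂ, (∀ k < n, z ≠ starRingEnd ℂ (a k)) →
      q.eval z = tau n z (fun k => starRingEnd ℂ (a k)) * Sn (A:ℂ) (B:ℂ) lam n s a z := by
    intro z hz
    rw [hq, Polynomial.eval_finset_sum, Sn_eq, Finset.mul_sum]
    refine Finset.sum_congr rfl fun j hj => ?_
    rw [Polynomial.eval_mul, Polynomial.eval_C, Qpoly_eval ha (Finset.mem_range.1 hj) z hz]
    ring
  refine ⟨⟨q, hqdeg, hqeval⟩, ?_⟩
  -- part 2
  have hreal_ne : ∀ (t : ℝ), ∀ k < n, (t:ℂ) ≠ starRingEnd ℂ (a k) := by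
    intro t k _ h
    exact (conj_sub_ne ha k t) (by rw [h]; ring)
  have hval : ∀ (p : Polynomial ℂ) (c : ℕ → ℂ),
      (∀ t : ℝ, p.eval (t:ℂ) = tau n t (fun k => starRingEnd ℂ (a k)) *
          (∑ j ∈ Finset.range n, c j * Phi a j t)) →
      (∫ t : ℝ, ‖Kker (A:ℂ) (B:ℂ) lam s t - p.eval (t:ℂ)‖^2
          / ‖rho0 * tau n t a‖^2)
      = (∫ t : ℝ, ‖FF (A:ℂ) (B:ℂ) lam n s a c t‖^2) * (‖rho0‖^2)⁻¹ := by
    intro p c hpc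
    rw [← MeasureTheory.integral_mul_const]
    apply integral_congr_ae
    filter_upwards with t
    rw [hpc t, hpoint t _]
    rfl
  -- the LHS equals the q-value
  have hLHS : (∫ t : ℝ, ‖Kker (A:ℂ) (B:ℂ) lam s t -
          tau n t (fun k => starRingEnd ℂ (a k)) * Sn (A:ℂ) (B:ℂ) lam n s a t‖^2 /
        ‖rho0 * tau n t a‖^2)
      = (∫ t : ℝ, ‖FF (A:ℂ) (B:ℂ) lam n s a (Rhat (A:ℂ) (B:ℂ) lam n s a) t‖^2) *
        (‖rho0‖^2)⁻¹ := by
    rw [← MeasureTheory.integral_mul_const]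
    apply integral_congr_ae
    filter_upwards with t
    rw [hpoint t _]
    rfl
  rw [hLHS]
  have hw0 : (0:ℝ) ≤ (‖rho0‖^2)⁻¹ := by positivity
  -- membership
  have hmem : (∫ t : ℝ, ‖FF (A:ℂ) (B:ℂ) lam n s a (Rhat (A:ℂ) (B:ℂ) lam n s a) t‖^2) *
      (‖rho0‖^2)⁻¹ ∈ {y : ℝ | ∃ p : Polynomial ℂ, p.degree < (n : ℕ) ∧
        y = ∫ t : ℝ, ‖Kker (A : ℂ) (B : ℂ) lam s t - p.eval (t : ℂ)‖ ^ 2 /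
              ‖rho0 * tau n t a‖ ^ 2} := by
    refine ⟨q, hqdeg, ?_⟩
    rw [hval q (Rhat (A:ℂ) (B:ℂ) lam n s a) fun t => ?_]
    rw [hqeval t (hreal_ne t), Sn_eq]
  -- lower bound
  have hlb : ∀ y ∈ {y : ℝ | ∃ p : Polynomial ℂ, p.degree < (n : ℕ) ∧
        y = ∫ t : ℝ, ‖Kker (A : ℂ) (B : ℂ) lam s t - p.eval (t : ℂ)‖ ^ 2 /
              ‖rho0 * tau n t a‖ ^ 2},
      (∫ t : ℝ, ‖FF (A:ℂ) (B:ℂ) lam n s a (Rhat (A:ℂ) (B:ℂ) lam n s a) t‖^2) *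
        (‖rho0‖^2)⁻¹ ≤ y := by
    rintro y ⟨p, hpdeg, rfl⟩
    obtain ⟨c, hc⟩ := rep_exists n a ha ha2 p hpdeg
    have hpc : ∀ t : ℝ, p.eval (t:ℂ) = tau n t (fun k => starRingEnd ℂ (a k)) *
        (∑ j ∈ Finset.range n, c j * Phi a j t) := by
      intro t
      rw [hc, Polynomial.eval_finset_sum, Finset.mul_sum]
      refine Finset.sum_congr rfl fun j hj => ?_
      rw [Polynomial.eval_mul, Polynomial.eval_C,
        Qpoly_eval ha (Finset.mem_range.1 hj) (t:ℂ) (hreal_ne t)]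
      ring
    rw [hval p c hpc]
    exact mul_le_mul_of_nonneg_right (key_ineq (A:ℂ) (B:ℂ) ha ha2 hlam hs c) hw0
  exact le_antisymm (le_csInf ⟨_, hmem⟩ hlb) (csInf_le ⟨_, hlb⟩ hmem)
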